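/- For every ϑ ∈ 𝒮 different from the two sequences (1, 0, 0, …) and (2^{−1}, 2^{−2}, 2^{−3}, …), the function s ↦ H(ϑ; s) is strictly convex on the interval (−1, ∞). If ϑ is equal to one of these two sequences, then H(ϑ; s) = 1 for all s > −1. -/

import Mathlib

open Filter Topology

noncomputable section

namespace GreedyEnergy

/-- Decreasing list `n₁ > n₂ > ⋯ > n_p` of the binary exponents of `N`,
so that `N = 2^{n₁} + ⋯ + 2^{n_p}` with `n₁ > n₂ > ⋯ > n_p ≥ 0`. -/
def binExps (N : ℕ) : List ℕ :=
  ((List.range (N + 1)).filter fun i => N.testBit i).reverse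

/-- The number `p = τ_b(N)` of ones in the binary expansion of `N`. -/
def pbin (N : ℕ) : ℕ := (binExps N).length

/-- `η(N)` viewed as an infinite sequence (0-indexed): the entry of index `k`
is `θ_{k+1} = 2^{n_{k+1}}/N` for `k < p`, and `0` for `k ≥ p`. -/
def eta (N : ℕ) : ℕ → ℝ :=
  fun k => ((binExps N).map fun n => (2 : ℝ) ^ n / (N : ℝ)).getD k 0

/-- `H(θ; s)` for a finite vector of length `p` given (0-indexed) by `θ : ℕ → ℝ`:
`H(θ;s) = Σ_{k=1}^p θ_k^{s+1} + 2(2^s − 1) Σ_{k=1}^{p−1} θ_k^s Σ_{j=k+1}^p θ_j`. -/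
def Hvec (θ : ℕ → ℝ) (p : ℕ) (s : ℝ) : ℝ :=
  (∑ k ∈ Finset.range p, θ k ^ (s + 1)) +
    2 * ((2 : ℝ) ^ s - 1) *
      ∑ k ∈ Finset.range p, θ k ^ s * ∑ j ∈ Finset.Ico (k + 1) p, θ j

/-- `K(θ) = 2 log 2 + Σ_{k=1}^p θ_k² log(θ_k/4) + 2 Σ_{k=1}^{p−1} (Σ_{j=k+1}^p θ_j) θ_k log θ_k`. -/
def Kvec (θ : ℕ → ℝ) (p : ℕ) : ℝ :=
  2 * Real.log 2 + (∑ k ∈ Finset.range p, θ k ^ 2 * Real.log (θ k / 4)) +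
    2 * ∑ k ∈ Finset.range p, (∑ j ∈ Finset.Ico (k + 1) p, θ j) * (θ k * Real.log (θ k))

/-- `R(θ) = −(2 log 2) Σ_{k=1}^p (k−1) θ_k − Σ_{k=1}^p θ_k log θ_k` (0-indexed: `k−1 ↦ k`). -/
def Rvec (θ : ℕ → ℝ) (p : ℕ) : ℝ :=
  -(2 * Real.log 2) * (∑ k ∈ Finset.range p, (k : ℝ) * θ k) -
    ∑ k ∈ Finset.range p, θ k * Real.log (θ k)

/-- `G(θ; s) = Σ_{k=1}^p θ_k^s`. -/
def Gvec (θ : ℕ → ℝ) (p : ℕ) (s : ℝ) : ℝ := ∑ k ∈ Finset.range p, θ k ^ s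

/-- `Λ(θ) = Σ_{k=1}^p θ_k log θ_k`. -/
def Λvec (θ : ℕ → ℝ) (p : ℕ) : ℝ := ∑ k ∈ Finset.range p, θ k * Real.log (θ k)

/-- `H(η(N); s)`. -/
def Heta (N : ℕ) (s : ℝ) : ℝ := Hvec (eta N) (pbin N) s

/-- `K(η(N))`. -/
def Keta (N : ℕ) : ℝ := Kvec (eta N) (pbin N)

/-- `R(η(N))`. -/
def Reta (N : ℕ) : ℝ := Rvec (eta N) (pbin N)

/-- `G(η(N); s)`. -/
def Geta (N : ℕ) (s : ℝ) : ℝ := Gvec (eta N) (pbin N) s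

/-- `Λ(η(N))`. -/
def Λeta (N : ℕ) : ℝ := Λvec (eta N) (pbin N)

/-- The set `𝒮` of infinite sequences `ϑ` for which there is a strictly increasing
sequence of positive integers `N_m` with `ϑ_j = lim_m (η(N_m))_j` for every `j`. -/
def Sset : Set (ℕ → ℝ) :=
  {ϑ | ∃ Nm : ℕ → ℕ, StrictMono Nm ∧ (∀ m, 1 ≤ Nm m) ∧
        ∀ j, Tendsto (fun m => eta (Nm m) j) atTop (𝓝 (ϑ j))}

/-- `H(ϑ; s)` for an infinite sequence `ϑ` (0-indexed). The conventions
`ϑ_n log ϑ_n = 0` and `ϑ_n^s ϑ_j = 0` when `ϑ_n = 0` hold automatically,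
since `Real.log 0 = 0` and `(0:ℝ) ^ s = 0` for `s ≠ 0` (and the factor
`2^s − 1` vanishes when `s = 0`). -/
def Hinf (ϑ : ℕ → ℝ) (s : ℝ) : ℝ :=
  (∑' n : ℕ, ϑ n ^ (s + 1)) +
    2 * ((2 : ℝ) ^ s - 1) * ∑' n : ℕ, ϑ n ^ s * ∑' j : ℕ, ϑ (n + 1 + j)

/-- `K(ϑ)` for an infinite sequence `ϑ`. -/
def Kinf (ϑ : ℕ → ℝ) : ℝ :=
  2 * Real.log 2 + (∑' n : ℕ, ϑ n ^ 2 * Real.log (ϑ n / 4)) +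
    2 * ∑' n : ℕ, (∑' j : ℕ, ϑ (n + 1 + j)) * (ϑ n * Real.log (ϑ n))

/-- `R(ϑ)` for an infinite sequence `ϑ` (0-indexed: `n−1 ↦ n`). -/
def Rinf (ϑ : ℕ → ℝ) : ℝ :=
  -(2 * Real.log 2) * (∑' n : ℕ, (n : ℝ) * ϑ n) - ∑' n : ℕ, ϑ n * Real.log (ϑ n)

/-- The set of limit points of a real sequence: values of convergent subsequences. -/
def limitPoints (x : ℕ → ℝ) : Set ℝ :=
  {L | ∃ φ : ℕ → ℕ, StrictMono φ ∧ Tendsto (fun m => x (φ m)) atTop (𝓝 L)}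

/-- The Riesz `s`-kernel: `k_s(z,w) = |z−w|^{−s}` for `s ≠ 0`, `k_0(z,w) = −log|z−w|`. -/
def kernel (s : ℝ) (z w : ℂ) : ℝ :=
  if s = 0 then -Real.log (‖z - w‖) else ‖z - w‖ ^ (-s)

/-- The Riesz `s`-energy `E_s(a_0, …, a_{N−1}) = Σ_{i ≠ j} k_s(a_i, a_j)`. -/
def energy (s : ℝ) (a : ℕ → ℂ) (N : ℕ) : ℝ :=
  ∑ i ∈ Finset.range N, ∑ j ∈ Finset.range N,
    if i ≠ j then kernel s (a i) (a j) else 0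

/-- The potential `U_{N,s}(z) = Σ_{ℓ=0}^{N−1} k_s(z, a_ℓ)`. -/
def pot (s : ℝ) (a : ℕ → ℂ) (N : ℕ) (z : ℂ) : ℝ :=
  ∑ l ∈ Finset.range N, kernel s z (a l)

/-- A greedy `s`-energy sequence on the unit circle: all points lie on `S¹`, and for
every `N ≥ 1` the point `a_N` minimizes (if `s ≥ 0`) resp. maximizes (if `s < 0`)
the potential `U_{N,s}` over `S¹`. -/
def IsGreedy (s : ℝ) (a : ℕ → ℂ) : Prop :=
  (∀ n, ‖a n‖ = 1) ∧
    ∀ N, 1 ≤ N →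
      ((0 ≤ s → ∀ z : ℂ, ‖z‖ = 1 → pot s a N (a N) ≤ pot s a N z) ∧
        (s < 0 → ∀ z : ℂ, ‖z‖ = 1 → pot s a N z ≤ pot s a N (a N)))

/-- `I_s(σ) = 2^{−s} Γ((1−s)/2) / (√π Γ(1 − s/2))`. -/
def Isigma (s : ℝ) : ℝ :=
  (2 : ℝ) ^ (-s) / Real.sqrt Real.pi * (Real.Gamma ((1 - s) / 2) / Real.Gamma (1 - s / 2))

/-- The value `ζ(s)` of the Riemann zeta function at a real `s` (real part of the
analytically continued zeta function). -/
def zetaR (s : ℝ) : ℝ := (riemannZeta (s : ℂ)).re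



/-! ### Auxiliary development for stmt15 -/

private lemma two_pow_le_of_testBit {N i : ℕ} (h : N.testBit i = true) : 2 ^ i ≤ N := by
  by_contra hlt
  rw [Nat.testBit_eq_false_of_lt (not_le.mp hlt)] at h
  simp at h

private lemma mem_binExps {N n : ℕ} : n ∈ binExps N ↔ N.testBit n = true := by
  unfold binExps
  simp only [List.mem_reverse, List.mem_filter, List.mem_range]
  constructor
  · exact fun h => h.2
  · intro h
    refine ⟨?_, h⟩
    have h2 := two_pow_le_of_testBit h
    have h3 := Nat.lt_two_pow_self (n := n)
    omega

private lemma binExps_sorted (N : ℕ) : (binExps N).Pairwise (· > ·) := by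
  unfold binExps
  have h : ((List.range (N+1)).filter fun i => N.testBit i).Pairwise (· < ·) :=
    List.pairwise_lt_range.filter _
  exact List.pairwise_reverse.2 h

private lemma binExps_strict {N k : ℕ} (h : k + 1 < (binExps N).length) :
    (binExps N)[k+1]'h < (binExps N)[k]'(by omega) := by
  have hs := binExps_sorted N
  exact List.pairwise_iff_getElem.mp hs k (k+1) (by omega) h (by omega)

private lemma binExps_zero : binExps 0 = [] := by
  simp [binExps, Nat.zero_testBit]

private lemma sum_ite_testBit (w : ℕ) : ∀ N : ℕ, N < 2 ^ w →
    ∑ i ∈ Finset.range w, (if N.testBit i then 2^i else 0) = N := by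
  induction w with
  | zero => intro N h; simp at h; simp [h]
  | succ w ih =>
    intro N h
    rw [Finset.sum_range_succ']
    have h2 : N / 2 < 2 ^ w := by
      have h3 : 2 ^ (w+1) = 2 * 2 ^ w := by ring
      omega
    have hh := ih (N/2) h2
    have e1 : ∀ i, (if N.testBit (i+1) then 2^(i+1) else 0)
        = 2 * (if (N/2).testBit i then 2^i else 0) := by
      intro i
      rw [Nat.testBit_succ]
      by_cases hb : (N/2).testBit i <;> simp [hb, pow_succ] <;> ring
    simp only [e1, ← Finset.mul_sum, hh]
    have hb0 : (if N.testBit 0 then 2^0 else 0) = N % 2 := by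
      rcases Nat.mod_two_eq_zero_or_one N with h0|h0 <;>
        simp [Nat.testBit_zero, h0]
    rw [hb0]
    omega

private lemma sum_binExps (N : ℕ) : (((binExps N).map fun n => 2^n).sum) = N := by
  unfold binExps
  rw [List.map_reverse, List.sum_reverse]
  have key : ∀ w, ((((List.range w).filter fun i => N.testBit i).map fun n => 2^n).sum)
      = ∑ i ∈ Finset.range w, (if N.testBit i then 2^i else 0) := by
    intro w
    induction w with
    | zero => simp
    | succ w ih =>
      rw [List.range_succ, List.filter_append, List.map_append, List.sum_append, ih,
        Finset.sum_range_succ]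
      by_cases hb : N.testBit w <;> simp [hb]
  rw [key]
  apply sum_ite_testBit
  calc N < 2 ^ N := Nat.lt_two_pow_self
    _ ≤ 2 ^ (N+1) := Nat.pow_le_pow_right (by norm_num) (by omega)

private lemma eta_eq_getElem {N k : ℕ} (h : k < (binExps N).length) :
    eta N k = 2 ^ ((binExps N)[k]'h) / N := by
  unfold eta
  rw [List.getD_eq_getElem _ _ (by simpa using h)]
  simp

private lemma eta_eq_zero {N k : ℕ} (h : (binExps N).length ≤ k) : eta N k = 0 := by
  unfold eta
  rw [List.getD_eq_default _ _ (by simpa using h)]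

private lemma eta_nonneg (N k : ℕ) : 0 ≤ eta N k := by
  rcases lt_or_ge k (binExps N).length with h|h
  · rw [eta_eq_getElem h]; positivity
  · rw [eta_eq_zero h]

private lemma eta_le_one {N : ℕ} (hN : 1 ≤ N) (k : ℕ) : eta N k ≤ 1 := by
  rcases lt_or_ge k (binExps N).length with h|h
  · rw [eta_eq_getElem h]
    have hNR : (0:ℝ) < N := by exact_mod_cast hN
    rw [div_le_one hNR]
    have hmem : (binExps N)[k]'h ∈ binExps N := List.getElem_mem _
    have h2 := two_pow_le_of_testBit (mem_binExps.mp hmem)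
    exact_mod_cast h2
  · rw [eta_eq_zero h]; norm_num

private lemma eta_two_mul_le (N k : ℕ) : 2 * eta N (k+1) ≤ eta N k := by
  rcases lt_or_ge (k+1) (binExps N).length with h|h
  · have hk : k < (binExps N).length := by omega
    rcases Nat.eq_zero_or_pos N with rfl|hN
    · rw [binExps_zero] at h; simp at h
    have hNR : (0:ℝ) < N := by exact_mod_cast hN
    rw [eta_eq_getElem h, eta_eq_getElem hk]
    have hlt := binExps_strict h
    have hnat : (2:ℕ)^(((binExps N)[k+1]'h)+1) ≤ 2^((binExps N)[k]'hk) :=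
      Nat.pow_le_pow_right (by norm_num) (by omega)
    have key : (2:ℝ)*2^((binExps N)[k+1]'h) ≤ 2^((binExps N)[k]'hk) := by
      calc (2:ℝ)*2^((binExps N)[k+1]'h) = (2:ℝ)^(((binExps N)[k+1]'h)+1) := by ring
        _ ≤ 2^((binExps N)[k]'hk) := by exact_mod_cast hnat
    calc 2 * ((2:ℝ)^((binExps N)[k+1]'h) / N) = (2*(2:ℝ)^((binExps N)[k+1]'h)) / N := by ring
      _ ≤ (2:ℝ)^((binExps N)[k]'hk) / N := by gcongr
  · rw [eta_eq_zero h]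
    simpa using eta_nonneg N k

private lemma eta_dichot (N k : ℕ) :
    2 * eta N (k+1) = eta N k ∨ 4 * eta N (k+1) ≤ eta N k := by
  rcases lt_or_ge (k+1) (binExps N).length with h|h
  · have hk : k < (binExps N).length := by omega
    rcases Nat.eq_zero_or_pos N with rfl|hN
    · rw [binExps_zero] at h; simp at h
    have hNR : (0:ℝ) < N := by exact_mod_cast hN
    have hlt := binExps_strict h
    rw [eta_eq_getElem h, eta_eq_getElem hk]
    rcases eq_or_lt_of_le (show ((binExps N)[k+1]'h) + 1 ≤ (binExps N)[k]'hk by omega)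
      with heq|hlt2
    · left
      rw [← heq, pow_succ]
      try ring
    · right
      have hnat : (2:ℕ)^(((binExps N)[k+1]'h)+2) ≤ 2^((binExps N)[k]'hk) :=
        Nat.pow_le_pow_right (by norm_num) (by omega)
      have key : (4:ℝ)*2^((binExps N)[k+1]'h) ≤ 2^((binExps N)[k]'hk) := by
        calc (4:ℝ)*2^((binExps N)[k+1]'h) = (2:ℝ)^(((binExps N)[k+1]'h)+2) := by ring
          _ ≤ 2^((binExps N)[k]'hk) := by exact_mod_cast hnat
      calc 4 * ((2:ℝ)^((binExps N)[k+1]'h) / N) = (4*(2:ℝ)^((binExps N)[k+1]'h)) / N := by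
            ring
        _ ≤ (2:ℝ)^((binExps N)[k]'hk) / N := by gcongr
  · right
    rw [eta_eq_zero h]
    simpa using eta_nonneg N k

private lemma sum_range_getD (M : List ℝ) :
    ∑ k ∈ Finset.range M.length, M.getD k 0 = M.sum := by
  induction M with
  | nil => simp
  | cons a t ih =>
    rw [List.length_cons, Finset.sum_range_succ']
    simp only [List.getD_cons_succ, List.getD_cons_zero]
    rw [ih, List.sum_cons]
    ring

private lemma list_map_div_sum (l : List ℕ) (c : ℝ) :
    (l.map fun n => (2:ℝ)^n / c).sum = (l.map fun n => (2:ℝ)^n).sum / c := by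
  induction l with
  | nil => simp
  | cons a t ih => simp [ih, add_div]

private lemma list_map_pow_cast (l : List ℕ) :
    (l.map fun n => (2:ℝ)^n).sum = ((l.map fun n => 2^n).sum : ℕ) := by
  induction l with
  | nil => simp
  | cons a t ih =>
    rw [List.map_cons, List.map_cons, List.sum_cons, List.sum_cons, ih]
    push_cast
    ring

private lemma eta_sum_eq_one {N : ℕ} (hN : 1 ≤ N) {K : ℕ} (hK : pbin N ≤ K) :
    ∑ k ∈ Finset.range K, eta N k = 1 := by
  have h1 : ∑ k ∈ Finset.range K, eta N k = ∑ k ∈ Finset.range (pbin N), eta N k := by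
    refine (Finset.sum_subset (Finset.range_subset_range.2 hK) ?_).symm
    intro x _ hx
    simp only [Finset.mem_range, not_lt] at hx
    exact eta_eq_zero hx
  rw [h1]
  have h2 : ∀ k, eta N k = (((binExps N).map fun n => (2:ℝ)^n/(N:ℝ)).getD k 0) := fun k => rfl
  have hlen : pbin N = ((binExps N).map fun n => (2:ℝ)^n/(N:ℝ)).length := by simp [pbin]
  simp only [h2]
  rw [hlen, sum_range_getD, list_map_div_sum, list_map_pow_cast, sum_binExps]
  have hNR : (0:ℝ) < N := by exact_mod_cast hN
  field_simp

private lemma eta_sum_le_one {N : ℕ} (hN : 1 ≤ N) (K : ℕ) :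
    ∑ k ∈ Finset.range K, eta N k ≤ 1 := by
  rcases le_or_gt (pbin N) K with h|h
  · exact le_of_eq (eta_sum_eq_one hN h)
  · rw [← eta_sum_eq_one hN (le_refl (pbin N))]
    apply Finset.sum_le_sum_of_subset_of_nonneg (Finset.range_subset_range.2 h.le)
    intro i _ _
    exact eta_nonneg N i

private lemma eta_le_pow {N : ℕ} (hN : 1 ≤ N) (k : ℕ) : eta N k ≤ (2⁻¹:ℝ)^k := by
  induction k with
  | zero => simpa using eta_le_one hN 0
  | succ k ih =>
    have h2 := eta_two_mul_le N k
    calc eta N (k+1) ≤ eta N k / 2 := by linarith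
      _ ≤ (2⁻¹:ℝ)^k / 2 := by linarith
      _ = (2⁻¹:ℝ)^(k+1) := by rw [pow_succ]; ring

private lemma geom_sum_range_le (n : ℕ) : ∑ j ∈ Finset.range n, (2⁻¹:ℝ)^j ≤ 2 := by
  rw [geom_sum_eq (by norm_num)]
  have h : (0:ℝ) ≤ (2⁻¹:ℝ)^n := by positivity
  have e : ((2⁻¹:ℝ)^n - 1)/((2⁻¹:ℝ) - 1) = 2 - 2*(2⁻¹:ℝ)^n := by
    rw [div_eq_iff (by norm_num : ((2⁻¹:ℝ) - 1) ≠ 0)]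
    ring
  rw [e]
  linarith

private lemma eta_sum_ge {N : ℕ} (hN : 1 ≤ N) (K : ℕ) :
    1 - 2*(2⁻¹:ℝ)^K ≤ ∑ k ∈ Finset.range K, eta N k := by
  set K' := max K (pbin N) with hK'
  have h1 : ∑ k ∈ Finset.range K', eta N k = 1 := eta_sum_eq_one hN (le_max_right _ _)
  have hsplit : (∑ k ∈ Finset.range K, eta N k) + (∑ k ∈ Finset.Ico K K', eta N k)
      = ∑ k ∈ Finset.range K', eta N k :=
    Finset.sum_range_add_sum_Ico _ (le_max_left _ _)
  have h2 : ∑ k ∈ Finset.Ico K K', eta N k ≤ ∑ k ∈ Finset.Ico K K', (2⁻¹:ℝ)^k :=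
    Finset.sum_le_sum (fun i _ => eta_le_pow hN i)
  have h3 : ∑ k ∈ Finset.Ico K K', (2⁻¹:ℝ)^k ≤ 2*(2⁻¹:ℝ)^K := by
    rw [Finset.sum_Ico_eq_sum_range]
    have e : ∀ j, (2⁻¹:ℝ)^(K+j) = (2⁻¹:ℝ)^K * (2⁻¹:ℝ)^j := fun j => pow_add _ _ _
    simp only [e, ← Finset.mul_sum]
    have hg := geom_sum_range_le (K' - K)
    have hp : (0:ℝ) ≤ (2⁻¹:ℝ)^K := by positivity
    nlinarith
  linarith

/-! ### Limit facts for `ϑ ∈ Sset` -/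

private lemma theta_nonneg {ϑ : ℕ → ℝ} (hϑ : ϑ ∈ Sset) (j : ℕ) : 0 ≤ ϑ j := by
  obtain ⟨Nm, -, -, hlim⟩ := hϑ
  exact ge_of_tendsto (hlim j) (Filter.Eventually.of_forall fun m => eta_nonneg _ _)

private lemma theta_step {ϑ : ℕ → ℝ} (hϑ : ϑ ∈ Sset) (j : ℕ) : 2 * ϑ (j+1) ≤ ϑ j := by
  obtain ⟨Nm, -, -, hlim⟩ := hϑ
  exact le_of_tendsto_of_tendsto' ((hlim (j+1)).const_mul 2) (hlim j)
    fun m => eta_two_mul_le _ _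

private lemma theta_le_pow {ϑ : ℕ → ℝ} (hϑ : ϑ ∈ Sset) (j : ℕ) : ϑ j ≤ (2⁻¹:ℝ)^j := by
  obtain ⟨Nm, -, hN, hlim⟩ := hϑ
  exact le_of_tendsto (hlim j) (Filter.Eventually.of_forall fun m => eta_le_pow (hN m) j)

private lemma theta_dichot {ϑ : ℕ → ℝ} (hϑ : ϑ ∈ Sset) (n : ℕ) :
    2 * ϑ (n+1) = ϑ n ∨ 4 * ϑ (n+1) ≤ ϑ n := by
  rcases le_or_gt (4 * ϑ (n+1)) (ϑ n) with h|h
  · exact Or.inr h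
  left
  obtain ⟨Nm, -, -, hlim⟩ := hϑ
  have ht : Tendsto (fun m => 4 * eta (Nm m) (n+1) - eta (Nm m) n) atTop
      (𝓝 (4 * ϑ (n+1) - ϑ n)) := ((hlim (n+1)).const_mul 4).sub (hlim n)
  have hev : ∀ᶠ m in atTop, 0 < 4 * eta (Nm m) (n+1) - eta (Nm m) n :=
    ht.eventually (eventually_gt_nhds (by linarith))
  have hev2 : (fun m => eta (Nm m) n) =ᶠ[atTop] (fun m => 2 * eta (Nm m) (n+1)) := by
    filter_upwards [hev] with m hm
    rcases eta_dichot (Nm m) n with h'|h'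
    · exact h'.symm
    · linarith
  exact tendsto_nhds_unique ((hlim (n+1)).const_mul 2) ((hlim n).congr' hev2)

private lemma theta_summable {ϑ : ℕ → ℝ} (hϑ : ϑ ∈ Sset) : Summable ϑ :=
  Summable.of_nonneg_of_le (theta_nonneg hϑ) (theta_le_pow hϑ)
    (summable_geometric_of_lt_one (by norm_num) (by norm_num))

private lemma theta_tsum_one {ϑ : ℕ → ℝ} (hϑ : ϑ ∈ Sset) : ∑' n, ϑ n = 1 := by
  have hsum := (theta_summable hϑ).hasSum.tendsto_sum_nat
  obtain ⟨Nm, -, hN, hlim⟩ := id hϑ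
  have hle : ∀ K, ∑ k ∈ Finset.range K, ϑ k ≤ 1 := by
    intro K
    have htd : Tendsto (fun m => ∑ k ∈ Finset.range K, eta (Nm m) k) atTop
        (𝓝 (∑ k ∈ Finset.range K, ϑ k)) := tendsto_finset_sum _ (fun k _ => hlim k)
    exact le_of_tendsto htd (Filter.Eventually.of_forall fun m => eta_sum_le_one (hN m) K)
  have hge : ∀ K, 1 - 2*(2⁻¹:ℝ)^K ≤ ∑ k ∈ Finset.range K, ϑ k := by
    intro K
    have htd : Tendsto (fun m => ∑ k ∈ Finset.range K, eta (Nm m) k) atTop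
        (𝓝 (∑ k ∈ Finset.range K, ϑ k)) := tendsto_finset_sum _ (fun k _ => hlim k)
    exact ge_of_tendsto htd (Filter.Eventually.of_forall fun m => eta_sum_ge (hN m) K)
  have h1 : ∑' n, ϑ n ≤ 1 := le_of_tendsto hsum (Filter.Eventually.of_forall hle)
  have h2 : (1:ℝ) ≤ ∑' n, ϑ n := by
    have hg : Tendsto (fun K : ℕ => 1 - 2*(2⁻¹:ℝ)^K) atTop (𝓝 1) := by
      have h0 := tendsto_pow_atTop_nhds_zero_of_lt_one
        (by norm_num : (0:ℝ) ≤ 2⁻¹) (by norm_num : (2⁻¹:ℝ) < 1)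
      have h' := (h0.const_mul (2:ℝ)).const_sub (1:ℝ)
      simpa using h'
    exact le_of_tendsto_of_tendsto' hg hsum hge
  linarith

private def tail (ϑ : ℕ → ℝ) (n : ℕ) : ℝ := ∑' j, ϑ (n + 1 + j)

private lemma tail_summable {ϑ : ℕ → ℝ} (hϑ : ϑ ∈ Sset) (n : ℕ) :
    Summable (fun j => ϑ (n + 1 + j)) := by
  have h := (summable_nat_add_iff (n+1)).mpr (theta_summable hϑ)
  exact h.congr fun j => congrArg ϑ (Nat.add_comm _ _)

private lemma tail_nonneg {ϑ : ℕ → ℝ} (hϑ : ϑ ∈ Sset) (n : ℕ) : 0 ≤ tail ϑ n :=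
  tsum_nonneg fun j => theta_nonneg hϑ _

private lemma theta_chain {ϑ : ℕ → ℝ} (hϑ : ϑ ∈ Sset) (n : ℕ) :
    ∀ j, ϑ (n + 1 + j) ≤ (2⁻¹:ℝ)^(j+1) * ϑ n := by
  intro j
  induction j with
  | zero =>
    have h := theta_step hϑ n
    simp only [Nat.add_zero, pow_one]
    linarith
  | succ j ih =>
    have hstep := theta_step hϑ (n+1+j)
    have he : n+1+(j+1) = (n+1+j)+1 := by omega
    rw [he]
    calc ϑ ((n+1+j)+1) ≤ ϑ (n+1+j) / 2 := by linarith
      _ ≤ ((2⁻¹:ℝ)^(j+1) * ϑ n) / 2 := by linarith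
      _ = (2⁻¹:ℝ)^(j+1+1) * ϑ n := by rw [pow_succ]; ring

private lemma summable_half_succ : Summable (fun j : ℕ => (2⁻¹:ℝ)^(j+1)) :=
  ((summable_geometric_of_lt_one (r := (2⁻¹:ℝ)) (by norm_num) (by norm_num)).mul_left
    (2⁻¹:ℝ)).congr (fun j => by rw [pow_succ]; ring)

private lemma tsum_half_succ : ∑' j:ℕ, (2⁻¹:ℝ)^(j+1) = 1 := by
  have h : ∀ j:ℕ, (2⁻¹:ℝ)^(j+1) = 2⁻¹ * (2⁻¹:ℝ)^j := fun j => by rw [pow_succ]; ring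
  rw [tsum_congr h, tsum_mul_left,
    tsum_geometric_of_lt_one (by norm_num) (by norm_num)]
  norm_num

private lemma tail_le {ϑ : ℕ → ℝ} (hϑ : ϑ ∈ Sset) (n : ℕ) : tail ϑ n ≤ ϑ n := by
  have h1 : tail ϑ n ≤ ∑' j:ℕ, (2⁻¹:ℝ)^(j+1) * ϑ n :=
    Summable.tsum_le_tsum (theta_chain hϑ n) (tail_summable hϑ n) (summable_half_succ.mul_right _)
  rw [tsum_mul_right, tsum_half_succ] at h1
  linarith

private lemma theta_chain' {ϑ : ℕ → ℝ} (hϑ : ϑ ∈ Sset) (n : ℕ) :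
    ∀ j, ϑ (n + 1 + j) ≤ (2⁻¹:ℝ)^j * ϑ (n+1) := by
  intro j
  cases j with
  | zero => simp
  | succ j =>
    have h := theta_chain hϑ (n+1) j
    have he : n+1+(j+1) = (n+1)+1+j := by omega
    rw [he]
    exact h

private lemma tail_le' {ϑ : ℕ → ℝ} (hϑ : ϑ ∈ Sset) (n : ℕ) : tail ϑ n ≤ 2 * ϑ (n+1) := by
  have h1 : tail ϑ n ≤ ∑' j:ℕ, (2⁻¹:ℝ)^j * ϑ (n+1) :=
    Summable.tsum_le_tsum (theta_chain' hϑ n) (tail_summable hϑ n)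
      ((summable_geometric_of_lt_one (r := (2⁻¹:ℝ)) (by norm_num) (by norm_num)).mul_right _)
  rw [tsum_mul_right, tsum_geometric_of_lt_one (by norm_num) (by norm_num)] at h1
  norm_num at h1
  linarith

private lemma tail_succ {ϑ : ℕ → ℝ} (hϑ : ϑ ∈ Sset) (n : ℕ) :
    tail ϑ n = ϑ (n+1) + tail ϑ (n+1) := by
  unfold tail
  rw [Summable.tsum_eq_zero_add (tail_summable hϑ n)]
  have e2 : ∀ b:ℕ, ϑ (n + 1 + (b+1)) = ϑ (n + 1 + 1 + b) := fun b => congrArg ϑ (by omega)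
  rw [tsum_congr e2]

private lemma tail_zero {ϑ : ℕ → ℝ} (hϑ : ϑ ∈ Sset) {n : ℕ} (h : ϑ n = 0) :
    tail ϑ n = 0 := by
  have h1 := tail_le hϑ n
  have h2 := tail_nonneg hϑ n
  rw [h] at h1
  linarith

private lemma theta_zero_add_tail {ϑ : ℕ → ℝ} (hϑ : ϑ ∈ Sset) : ϑ 0 + tail ϑ 0 = 1 := by
  have h := theta_tsum_one hϑ
  rw [Summable.tsum_eq_zero_add (theta_summable hϑ)] at h
  rw [← h]
  congr 1
  unfold tail
  apply tsum_congr
  intro j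
  congr 1
  omega

/-! ### Convexity of exponential terms -/

private lemma convexOn_crpow {c a : ℝ} (hc : 0 ≤ c) (ha : 0 < a) :
    ConvexOn ℝ (Set.Ioi (-1:ℝ)) fun s => c * a ^ s := by
  refine ⟨convex_Ioi _, fun x _ y _ p q hp hq hpq => ?_⟩
  simp only [smul_eq_mul]
  rw [Real.rpow_def_of_pos ha, Real.rpow_def_of_pos ha, Real.rpow_def_of_pos ha]
  have h := convexOn_exp.2 (Set.mem_univ (Real.log a * x)) (Set.mem_univ (Real.log a * y))
    hp hq hpq
  simp only [smul_eq_mul] at h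
  have harg : Real.log a * (p * x + q * y)
      = p * (Real.log a * x) + q * (Real.log a * y) := by ring
  rw [harg]
  calc c * Real.exp (p * (Real.log a * x) + q * (Real.log a * y))
      ≤ c * (p * Real.exp (Real.log a * x) + q * Real.exp (Real.log a * y)) :=
        mul_le_mul_of_nonneg_left h hc
    _ = p * (c * Real.exp (Real.log a * x)) + q * (c * Real.exp (Real.log a * y)) := by ring

private lemma strictConvexOn_crpow {c a : ℝ} (hc : 0 < c) (ha : 0 < a) (ha1 : a ≠ 1) :
    StrictConvexOn ℝ (Set.Ioi (-1:ℝ)) fun s => c * a ^ s := by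
  refine ⟨convex_Ioi _, fun x _ y _ hxy p q hp hq hpq => ?_⟩
  simp only [smul_eq_mul]
  have hla : Real.log a ≠ 0 := by
    intro h0
    rcases Real.log_eq_zero.1 h0 with h|h|h
    · exact absurd h (by linarith)
    · exact ha1 h
    · linarith
  have hne : Real.log a * x ≠ Real.log a * y := fun h => hxy (mul_left_cancel₀ hla h)
  have h := strictConvexOn_exp.2 (Set.mem_univ (Real.log a * x))
    (Set.mem_univ (Real.log a * y)) hne hp hq hpq
  simp only [smul_eq_mul] at h
  rw [Real.rpow_def_of_pos ha, Real.rpow_def_of_pos ha, Real.rpow_def_of_pos ha]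
  have harg : Real.log a * (p * x + q * y)
      = p * (Real.log a * x) + q * (Real.log a * y) := by ring
  rw [harg]
  calc c * Real.exp (p * (Real.log a * x) + q * (Real.log a * y))
      < c * (p * Real.exp (Real.log a * x) + q * Real.exp (Real.log a * y)) :=
        (mul_lt_mul_iff_right₀ hc).mpr h
    _ = p * (c * Real.exp (Real.log a * x)) + q * (c * Real.exp (Real.log a * y)) := by ring

private lemma mul_rpow_self {x : ℝ} (hx : 0 ≤ x) {s : ℝ} (hs : s + 1 ≠ 0) :
    x * x ^ s = x ^ (s+1) := by
  rcases eq_or_lt_of_le hx with h|h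
  · rw [← h, Real.zero_rpow hs, zero_mul]
  · rw [Real.rpow_add_one h.ne']
    ring

/-! ### The decomposition kernel -/

private def kfun (ϑ : ℕ → ℝ) (n : ℕ) (s : ℝ) : ℝ :=
  (ϑ n - 2 * tail ϑ n) * ϑ n ^ s + 2 * tail ϑ (n+1) * (2 * ϑ (n+1)) ^ s

private lemma pow_swap (s : ℝ) (n : ℕ) :
    ((2⁻¹:ℝ)^n : ℝ) ^ (s+1) = ((2⁻¹:ℝ) ^ (s+1)) ^ n := by
  rw [← Real.rpow_natCast (2⁻¹:ℝ) n, ← Real.rpow_mul (by norm_num : (0:ℝ) ≤ 2⁻¹),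
    mul_comm, Real.rpow_mul (by norm_num : (0:ℝ) ≤ 2⁻¹), Real.rpow_natCast]

private lemma summable_u {ϑ : ℕ → ℝ} (hϑ : ϑ ∈ Sset) {s : ℝ} (hs : -1 < s) :
    Summable (fun n => ϑ n ^ (s+1)) := by
  have hr : Summable (fun n : ℕ => ((2⁻¹:ℝ) ^ (s+1)) ^ n) :=
    summable_geometric_of_lt_one (Real.rpow_nonneg (by norm_num) _)
      (Real.rpow_lt_one (by norm_num) (by norm_num) (by linarith))
  refine Summable.of_nonneg_of_le (fun n => Real.rpow_nonneg (theta_nonneg hϑ n) _) ?_ hr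
  intro n
  calc ϑ n ^ (s+1) ≤ ((2⁻¹:ℝ)^n) ^ (s+1) :=
      Real.rpow_le_rpow (theta_nonneg hϑ n) (theta_le_pow hϑ n) (by linarith)
    _ = ((2⁻¹:ℝ) ^ (s+1)) ^ n := pow_swap s n

private lemma summable_w {ϑ : ℕ → ℝ} (hϑ : ϑ ∈ Sset) {s : ℝ} (hs : -1 < s) :
    Summable (fun n => ϑ n ^ s * tail ϑ n) := by
  refine Summable.of_nonneg_of_le ?_ ?_ (summable_u hϑ hs)
  · intro n
    exact mul_nonneg (Real.rpow_nonneg (theta_nonneg hϑ n) _) (tail_nonneg hϑ n)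
  · intro n
    calc ϑ n ^ s * tail ϑ n ≤ ϑ n ^ s * ϑ n :=
        mul_le_mul_of_nonneg_left (tail_le hϑ n) (Real.rpow_nonneg (theta_nonneg hϑ n) _)
      _ = ϑ n ^ (s+1) := by
        rw [← mul_rpow_self (theta_nonneg hϑ n) (by linarith)]
        ring

private lemma summable_p {ϑ : ℕ → ℝ} (hϑ : ϑ ∈ Sset) {s : ℝ} (hs : -1 < s) :
    Summable (fun n => (ϑ n - 2 * tail ϑ n) * ϑ n ^ s) := by
  refine Summable.of_norm_bounded (summable_u hϑ hs) ?_
  intro n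
  rw [Real.norm_eq_abs, abs_mul]
  have h1 : |ϑ n - 2 * tail ϑ n| ≤ ϑ n :=
    abs_le.2 ⟨by linarith [tail_le hϑ n], by linarith [tail_nonneg hϑ n]⟩
  have h2 : |ϑ n ^ s| = ϑ n ^ s := abs_of_nonneg (Real.rpow_nonneg (theta_nonneg hϑ n) _)
  rw [h2]
  calc |ϑ n - 2*tail ϑ n| * ϑ n ^ s ≤ ϑ n * ϑ n ^ s :=
      mul_le_mul_of_nonneg_right h1 (Real.rpow_nonneg (theta_nonneg hϑ n) _)
    _ = ϑ n ^ (s+1) := mul_rpow_self (theta_nonneg hϑ n) (by linarith)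

private lemma summable_v {ϑ : ℕ → ℝ} (hϑ : ϑ ∈ Sset) {s : ℝ} (hs : -1 < s) :
    Summable (fun n => 2 * tail ϑ n * (2 * ϑ n) ^ s) := by
  have hr : Summable (fun n : ℕ => (2:ℝ)^(s+1) * ((2⁻¹:ℝ) ^ (s+1)) ^ n) :=
    (summable_geometric_of_lt_one (Real.rpow_nonneg (by norm_num) _)
      (Real.rpow_lt_one (by norm_num) (by norm_num) (by linarith))).mul_left _
  refine Summable.of_nonneg_of_le ?_ ?_ hr
  · intro n
    exact mul_nonneg (mul_nonneg (by norm_num) (tail_nonneg hϑ n))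
      (Real.rpow_nonneg (by linarith [theta_nonneg hϑ n]) _)
  · intro n
    have h0n := theta_nonneg hϑ n
    calc 2 * tail ϑ n * (2*ϑ n)^s ≤ (2*ϑ n) * (2*ϑ n)^s :=
        mul_le_mul_of_nonneg_right (by linarith [tail_le hϑ n])
          (Real.rpow_nonneg (by linarith) _)
      _ = (2*ϑ n)^(s+1) := mul_rpow_self (by linarith) (by linarith)
      _ ≤ (2*(2⁻¹:ℝ)^n)^(s+1) :=
        Real.rpow_le_rpow (by linarith) (by linarith [theta_le_pow hϑ n]) (by linarith)
      _ = (2:ℝ)^(s+1) * ((2⁻¹:ℝ)^(s+1))^n := by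
        rw [Real.mul_rpow (by norm_num) (by positivity), pow_swap s n]

private lemma summable_v' {ϑ : ℕ → ℝ} (hϑ : ϑ ∈ Sset) {s : ℝ} (hs : -1 < s) :
    Summable (fun n => 2 * tail ϑ (n+1) * (2 * ϑ (n+1)) ^ s) :=
  (summable_nat_add_iff 1).mpr (summable_v hϑ hs)

private lemma kfun_summable {ϑ : ℕ → ℝ} (hϑ : ϑ ∈ Sset) {s : ℝ} (hs : -1 < s) :
    Summable (fun n => kfun ϑ n s) :=
  (summable_p hϑ hs).add (summable_v' hϑ hs)

private lemma kfun_convex {ϑ : ℕ → ℝ} (hϑ : ϑ ∈ Sset) (n : ℕ) :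
    ConvexOn ℝ (Set.Ioi (-1:ℝ)) (kfun ϑ n) := by
  have h0 := theta_nonneg hϑ
  by_cases hn : ϑ n = 0
  · have hn1 : ϑ (n+1) = 0 := by
      have := theta_step hϑ n
      have := h0 (n+1)
      linarith [hn ▸ theta_step hϑ n]
    have e : kfun ϑ n = fun _ => (0:ℝ) := by
      funext s
      simp [kfun, hn, hn1, tail_zero hϑ hn, tail_zero hϑ hn1]
    rw [e]
    exact convexOn_const _ (convex_Ioi _)
  have hnpos : 0 < ϑ n := (h0 n).lt_of_ne (Ne.symm hn)
  rcases theta_dichot hϑ n with heq|hle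
  · have ht := tail_succ hϑ n
    have key : ϑ n - 2 * tail ϑ n = -(2 * tail ϑ (n+1)) := by
      rw [ht]
      linear_combination -heq
    have e : kfun ϑ n = fun _ => (0:ℝ) := by
      funext s
      unfold kfun
      rw [key, heq]
      ring
    rw [e]
    exact convexOn_const _ (convex_Ioi _)
  · have ht' := tail_le hϑ (n+1)
    have htsucc := tail_succ hϑ n
    have hc1 : 0 ≤ ϑ n - 2 * tail ϑ n := by linarith
    have h1 : ConvexOn ℝ (Set.Ioi (-1:ℝ)) (fun s => (ϑ n - 2*tail ϑ n) * ϑ n ^ s) :=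
      convexOn_crpow hc1 hnpos
    by_cases hn1 : ϑ (n+1) = 0
    · have e : kfun ϑ n = fun s => (ϑ n - 2*tail ϑ n) * ϑ n ^ s := by
        funext s
        unfold kfun
        rw [tail_zero hϑ hn1]
        ring
      rw [e]
      exact h1
    · have hp1 : 0 < ϑ (n+1) := (h0 _).lt_of_ne (Ne.symm hn1)
      have h2 : ConvexOn ℝ (Set.Ioi (-1:ℝ))
          (fun s => 2 * tail ϑ (n+1) * (2*ϑ (n+1)) ^ s) :=
        convexOn_crpow (by linarith [tail_nonneg hϑ (n+1)]) (by linarith)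
      have h3 : ConvexOn ℝ (Set.Ioi (-1:ℝ)) (fun s : ℝ =>
          (ϑ n - 2*tail ϑ n) * ϑ n ^ s + 2 * tail ϑ (n+1) * (2*ϑ (n+1)) ^ s) := h1.add h2
      exact h3

private lemma Hinf_eq {ϑ : ℕ → ℝ} (hϑ : ϑ ∈ Sset) {s : ℝ} (hs : -1 < s) :
    Hinf ϑ s = (∑' n, kfun ϑ n s) + 2 * tail ϑ 0 * (2 * ϑ 0) ^ s := by
  have h0 := theta_nonneg hϑ
  have hterm : ∀ n, ϑ n ^ (s+1) + 2*((2:ℝ)^s - 1) * (ϑ n ^ s * tail ϑ n)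
      = (ϑ n - 2*tail ϑ n) * ϑ n ^ s + 2 * tail ϑ n * (2*ϑ n)^s := by
    intro n
    rw [Real.mul_rpow (by norm_num) (h0 n), ← mul_rpow_self (h0 n) (by linarith)]
    ring
  have hsum_u := summable_u hϑ hs
  have hsum_w := summable_w hϑ hs
  have hsum_p := summable_p hϑ hs
  have hsum_v := summable_v hϑ hs
  have hsum_v' := summable_v' hϑ hs
  show (∑' n, ϑ n ^ (s+1)) + 2*((2:ℝ)^s - 1) * (∑' n, ϑ n ^ s * tail ϑ n) = _
  calc (∑' n, ϑ n ^ (s+1)) + 2*((2:ℝ)^s-1) * (∑' n, ϑ n ^ s * tail ϑ n)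
      = (∑' n, ϑ n ^ (s+1)) + ∑' n, 2*((2:ℝ)^s-1) * (ϑ n ^ s * tail ϑ n) := by
        rw [tsum_mul_left]
    _ = ∑' n, (ϑ n ^ (s+1) + 2*((2:ℝ)^s-1) * (ϑ n ^ s * tail ϑ n)) :=
        (Summable.tsum_add hsum_u (hsum_w.mul_left _)).symm
    _ = ∑' n, ((ϑ n - 2*tail ϑ n) * ϑ n ^ s + 2 * tail ϑ n * (2*ϑ n)^s) :=
        tsum_congr hterm
    _ = (∑' n, (ϑ n - 2*tail ϑ n) * ϑ n ^ s) + ∑' n, 2 * tail ϑ n * (2*ϑ n)^s :=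
        Summable.tsum_add hsum_p hsum_v
    _ = (∑' n, (ϑ n - 2*tail ϑ n) * ϑ n ^ s)
        + (2 * tail ϑ 0 * (2*ϑ 0)^s + ∑' n, 2 * tail ϑ (n+1) * (2*ϑ (n+1))^s) := by
        rw [Summable.tsum_eq_zero_add hsum_v]
    _ = ((∑' n, (ϑ n - 2*tail ϑ n) * ϑ n ^ s)
        + ∑' n, 2 * tail ϑ (n+1) * (2*ϑ (n+1))^s) + 2 * tail ϑ 0 * (2*ϑ 0)^s := by
        ring
    _ = (∑' n, kfun ϑ n s) + 2 * tail ϑ 0 * (2*ϑ 0)^s := by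
        rw [← Summable.tsum_add hsum_p hsum_v']
        rfl

private lemma A_convex {ϑ : ℕ → ℝ} (hϑ : ϑ ∈ Sset) :
    ConvexOn ℝ (Set.Ioi (-1:ℝ)) (fun s => ∑' n, kfun ϑ n s) := by
  refine ⟨convex_Ioi _, fun x hx y hy p q hp hq hpq => ?_⟩
  have hmem : p • x + q • y ∈ Set.Ioi (-1:ℝ) := (convex_Ioi (-1:ℝ)) hx hy hp hq hpq
  simp only [smul_eq_mul]
  have hx' : -1 < x := hx
  have hy' : -1 < y := hy
  have hmem' : -1 < p*x + q*y := by simpa [smul_eq_mul] using hmem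
  have h1 : ∀ n, kfun ϑ n (p*x + q*y) ≤ p * kfun ϑ n x + q * kfun ϑ n y := by
    intro n
    have h := (kfun_convex hϑ n).2 hx hy hp hq hpq
    simpa [smul_eq_mul] using h
  calc (∑' n, kfun ϑ n (p*x+q*y)) ≤ ∑' n, (p * kfun ϑ n x + q * kfun ϑ n y) :=
      Summable.tsum_le_tsum h1 (kfun_summable hϑ hmem')
        (((kfun_summable hϑ hx').mul_left p).add ((kfun_summable hϑ hy').mul_left q))
    _ = p * (∑' n, kfun ϑ n x) + q * (∑' n, kfun ϑ n y) := by
      rw [Summable.tsum_add ((kfun_summable hϑ hx').mul_left p) ((kfun_summable hϑ hy').mul_left q),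
        tsum_mul_left, tsum_mul_left]

/-! ### The two special sequences -/

private lemma Hinf_delta (s : ℝ) (hs : -1 < s) :
    Hinf (fun n => if n = 0 then (1:ℝ) else 0) s = 1 := by
  unfold Hinf
  have h1 : (∑' n:ℕ, (if n = 0 then (1:ℝ) else 0) ^ (s+1)) = 1 := by
    have e : ∀ n:ℕ, (if n = 0 then (1:ℝ) else 0) ^ (s+1) = if n = 0 then 1 else 0 := by
      intro n
      by_cases h : n = 0 <;>
        simp [h, Real.one_rpow, Real.zero_rpow (by linarith : s+1 ≠ 0)]
    rw [tsum_congr e, tsum_ite_eq]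
  have h2 : ∀ n:ℕ, (∑' j:ℕ, (if n+1+j = 0 then (1:ℝ) else 0)) = 0 := by
    intro n
    have e : ∀ j:ℕ, (if n+1+j = 0 then (1:ℝ) else 0) = 0 := by
      intro j
      have : n+1+j ≠ 0 := by omega
      simp [this]
    rw [tsum_congr e, tsum_zero]
  have h3 : (∑' n:ℕ, (if n = 0 then (1:ℝ) else 0) ^ s
      * ∑' j:ℕ, (if n+1+j = 0 then (1:ℝ) else 0)) = 0 := by
    have e : ∀ n:ℕ, (if n = 0 then (1:ℝ) else 0) ^ s
        * (∑' j:ℕ, (if n+1+j = 0 then (1:ℝ) else 0)) = 0 := fun n => by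
      rw [h2 n, mul_zero]
    rw [tsum_congr e, tsum_zero]
  rw [h1, h3, mul_zero, add_zero]

private lemma Hinf_geom (s : ℝ) (hs : -1 < s) :
    Hinf (fun n => ((2:ℝ))⁻¹ ^ (n+1)) s = 1 := by
  have h2 : (0:ℝ) < 2⁻¹ := by norm_num
  set r := (2⁻¹:ℝ) ^ (s+1) with hr
  have hr0 : 0 < r := Real.rpow_pos_of_pos h2 _
  have hr1 : r < 1 := Real.rpow_lt_one (by norm_num) (by norm_num) (by linarith)
  have hpow : ∀ n:ℕ, (((2:ℝ))⁻¹^(n+1) : ℝ) ^ (s+1) = r ^ (n+1) := by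
    intro n
    rw [hr, ← pow_swap s (n+1)]
  have htsum_r : ∑' n:ℕ, r^(n+1) = r * (1-r)⁻¹ := by
    have e : ∀ n:ℕ, r^(n+1) = r * r^n := fun n => by rw [pow_succ]; ring
    rw [tsum_congr e, tsum_mul_left, tsum_geometric_of_lt_one hr0.le hr1]
  have htail : ∀ n:ℕ, (∑' j:ℕ, ((2:ℝ))⁻¹ ^ (n+1+j+1)) = ((2:ℝ))⁻¹^(n+1) := by
    intro n
    have e : ∀ j:ℕ, ((2:ℝ))⁻¹ ^ (n+1+j+1) = ((2:ℝ))⁻¹^(n+2) * ((2:ℝ))⁻¹^j := by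
      intro j
      rw [← pow_add]
      congr 1
      omega
    rw [tsum_congr e, tsum_mul_left, tsum_geometric_of_lt_one (by norm_num) (by norm_num)]
    have : ((1:ℝ) - 2⁻¹)⁻¹ = 2 := by norm_num
    rw [this, pow_succ]
    ring
  unfold Hinf
  have hinner : ∀ n:ℕ, ((((2:ℝ))⁻¹^(n+1) : ℝ)^s * ∑' j:ℕ, ((2:ℝ))⁻¹ ^ (n+1+j+1))
      = r^(n+1) := by
    intro n
    rw [htail n, mul_comm, mul_rpow_self (by positivity) (by linarith), hpow n]
  rw [tsum_congr hpow, tsum_congr hinner, htsum_r]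
  have h2s : (2:ℝ)^(s+1) * r = 1 := by
    rw [hr, ← Real.mul_rpow (by norm_num) (by norm_num)]
    norm_num
  have h2s' : (2:ℝ)^(s+1) = 2 * (2:ℝ)^s := by
    rw [Real.rpow_add_one (by norm_num : (2:ℝ) ≠ 0)]
    ring
  have key : (1 + 2*((2:ℝ)^s - 1)) * r = 1 - r := by
    have hx : 2*(2:ℝ)^s * r = 1 := by rw [← h2s']; exact h2s
    linear_combination hx
  have hrne : (1:ℝ) - r ≠ 0 := by linarith
  have expand : r*(1-r)⁻¹ + 2*((2:ℝ)^s-1)*(r*(1-r)⁻¹)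
      = ((1 + 2*((2:ℝ)^s-1))*r) * (1-r)⁻¹ := by ring
  rw [expand, key]
  field_simp

theorem stmt15 (ϑ : ℕ → ℝ) (hϑ : ϑ ∈ Sset) :
    ((ϑ ≠ (fun n => if n = 0 then (1 : ℝ) else 0) ∧
        ϑ ≠ (fun n => ((2 : ℝ))⁻¹ ^ (n + 1))) →
      StrictConvexOn ℝ (Set.Ioi (-1 : ℝ)) (fun s => Hinf ϑ s)) ∧
    ((ϑ = (fun n => if n = 0 then (1 : ℝ) else 0) ∨
        ϑ = (fun n => ((2 : ℝ))⁻¹ ^ (n + 1))) →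
      ∀ s : ℝ, -1 < s → Hinf ϑ s = 1) := by
  constructor
  · rintro ⟨hne1, hne2⟩
    have h0 := theta_nonneg hϑ
    have hsum1 := theta_zero_add_tail hϑ
    have htle := tail_le hϑ 0
    have htnn := tail_nonneg hϑ 0
    have ht0 : 0 < tail ϑ 0 := by
      rcases htnn.lt_or_eq with h|h
      · exact h
      · exfalso
        apply hne1
        have h00 : ϑ 0 = 1 := by rw [← h] at hsum1; linarith
        funext n
        cases n with
        | zero => simpa using h00
        | succ m =>
          have hm : ϑ (0 + 1 + m) ≤ tail ϑ 0 :=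
            Summable.le_tsum (tail_summable hϑ 0) m (fun j _ => h0 _)
          have he : (0:ℕ) + 1 + m = m + 1 := by omega
          rw [he, ← h] at hm
          have hz : ϑ (m+1) = 0 := le_antisymm hm (h0 (m+1))
          simp [hz]
    have hq_ne_half : ϑ 0 ≠ 2⁻¹ := by
      intro hhalf
      apply hne2
      have hle : ∀ n, ϑ n ≤ (2⁻¹:ℝ)^(n+1) := by
        intro n
        induction n with
        | zero => simpa [pow_one] using le_of_eq hhalf
        | succ m ih =>
          have hst := theta_step hϑ m
          calc ϑ (m+1) ≤ ϑ m / 2 := by linarith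
            _ ≤ (2⁻¹:ℝ)^(m+1)/2 := by linarith
            _ = (2⁻¹:ℝ)^(m+1+1) := by rw [pow_succ]; ring
      have hall : ∀ n, ϑ n = (2⁻¹:ℝ)^(n+1) := by
        by_contra hc
        push_neg at hc
        obtain ⟨m, hm⟩ := hc
        have hlt : ϑ m < (2⁻¹:ℝ)^(m+1) := (hle m).lt_of_ne hm
        have hbig := Summable.tsum_lt_tsum hle hlt (theta_summable hϑ) summable_half_succ
        rw [theta_tsum_one hϑ, tsum_half_succ] at hbig
        exact lt_irrefl _ hbig
      funext n
      exact hall n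
    have hqhalf_le : (2⁻¹:ℝ) ≤ ϑ 0 := by linarith
    have hbase_pos : (0:ℝ) < 2 * ϑ 0 := by linarith
    have hbase_ne : 2 * ϑ 0 ≠ 1 := by
      intro h
      apply hq_ne_half
      linarith
    have hB := strictConvexOn_crpow
      (show (0:ℝ) < 2 * tail ϑ 0 by linarith) hbase_pos hbase_ne
    have hA := A_convex hϑ
    have hsum := hA.add_strictConvexOn hB
    refine ⟨convex_Ioi _, fun x hx y hy hxy p q hp hq hpq => ?_⟩
    have hx' : (-1:ℝ) < x := hx
    have hy' : (-1:ℝ) < y := hy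
    have hmem : p • x + q • y ∈ Set.Ioi (-1:ℝ) := (convex_Ioi (-1:ℝ)) hx hy hp.le hq.le hpq
    have hmem' : (-1:ℝ) < p * x + q * y := by simpa [smul_eq_mul] using hmem
    have hlt := hsum.2 hx hy hxy hp hq hpq
    simp only [Pi.add_apply, smul_eq_mul] at hlt ⊢
    rw [Hinf_eq hϑ hmem', Hinf_eq hϑ hx', Hinf_eq hϑ hy']
    exact hlt
  · rintro (h|h) s hs
    · subst h
      exact Hinf_delta s hs
    · subst h
      exact Hinf_geom s hs


end GreedyEnergy
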